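/- arXiv:2001.07805 — 2 statements merged into one kernel-verified Lean document; each statement's English description precedes it below -/
import Mathlib

section
/- (Breakdown point lower bound in dimension one) Let p* be a Borel probability measure on ℝ that is halfspace-symmetric with center μ*, and let 0 ≤ ε < 1/2. Then there exists a finite constant B such that for every Borel probability measure p on ℝ with TV(p, p*) ≤ ε and every Tukey median x of p, |x − μ*| ≤ B. (Hence in dimension one the breakdown point of the median under TV corruption is at least 1/2.) -/
open MeasureTheory
open scoped ENNReal

noncomputable section

/-- One-dimensional Tukey depth: `min (p [μ, ∞)) (p (-∞, μ])`. -/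
def tukeyDepth1 (μ : ℝ) (p : Measure ℝ) : ℝ :=
  min (p (Set.Ici μ)).toReal (p (Set.Iic μ)).toReal

/-- `x` is a Tukey median (in dimension one) of `p`. -/
def IsTukeyMedian1 (x : ℝ) (p : Measure ℝ) : Prop :=
  ∀ y : ℝ, tukeyDepth1 y p ≤ tukeyDepth1 x p

/-- Total variation distance on `ℝ`: supremum over Borel sets `A` of `p A - q A`. -/
def tvDist1 (p q : Measure ℝ) : ℝ :=
  ⨆ A : {A : Set ℝ // MeasurableSet A}, ((p A).toReal - (q A).toReal)

/-- Halfspace symmetry on `ℝ` around `μ`: every projection `v * (x - μ)` is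
symmetric in distribution. -/
def IsHalfspaceSymmetric1 (p : Measure ℝ) (μ : ℝ) : Prop :=
  ∀ v : ℝ, p.map (fun x => v * (x - μ)) = p.map (fun x => -(v * (x - μ)))

/-- Decay function on `ℝ` centered at `μ`. -/
def decay1 (p : Measure ℝ) (μ : ℝ) (t : ℝ) : ℝ :=
  ⨆ v : {v : ℝ // |v| ≤ 1}, (p {x | t < (v : ℝ) * (x - μ)}).toReal

/-- For a probability measure, all real measures of sets are at most one. -/
lemma toReal_measure_le_one (p : Measure ℝ) [IsProbabilityMeasure p] (A : Set ℝ) :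
    (p A).toReal ≤ 1 := by
  have h1 : p A ≤ 1 := prob_le_one
  calc (p A).toReal ≤ (1 : ℝ≥0∞).toReal := ENNReal.toReal_mono ENNReal.one_ne_top h1
    _ = 1 := by simp

lemma toReal_measure_compl (p : Measure ℝ) [IsProbabilityMeasure p] {A : Set ℝ}
    (hA : MeasurableSet A) : (p Aᶜ).toReal = 1 - (p A).toReal := by
  rw [measure_compl hA (measure_ne_top p A), measure_univ,
    ENNReal.toReal_sub_of_le prob_le_one ENNReal.one_ne_top, ENNReal.toReal_one]

/-- From a TV bound, a two-sided bound on the measures of any measurable set. -/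
lemma tv_bound (p q : Measure ℝ) [IsProbabilityMeasure p] [IsProbabilityMeasure q]
    {ε : ℝ} (h : tvDist1 p q ≤ ε) {A : Set ℝ} (hA : MeasurableSet A) :
    (p A).toReal - (q A).toReal ≤ ε ∧ (q A).toReal - (p A).toReal ≤ ε := by
  have hbdd : BddAbove (Set.range fun A : {A : Set ℝ // MeasurableSet A} =>
      ((p A).toReal - (q A).toReal)) := by
    refine ⟨1, Set.forall_mem_range.2 fun B => ?_⟩
    have h1 : (p (B : Set ℝ)).toReal ≤ 1 := toReal_measure_le_one p B
    have h2 : 0 ≤ (q (B : Set ℝ)).toReal := ENNReal.toReal_nonneg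
    linarith
  have key : ∀ (B : Set ℝ), MeasurableSet B → (p B).toReal - (q B).toReal ≤ ε := by
    intro B hB
    exact le_trans (le_ciSup hbdd (⟨B, hB⟩ : {A : Set ℝ // MeasurableSet A})) h
  refine ⟨key A hA, ?_⟩
  have := key Aᶜ hA.compl
  rw [toReal_measure_compl p hA, toReal_measure_compl q hA] at this
  linarith

/-- Every probability measure on `ℝ` has a classical median. -/
lemma exists_median (p : Measure ℝ) [IsProbabilityMeasure p] :
    ∃ y : ℝ, 1 / 2 ≤ (p (Set.Iic y)).toReal ∧ 1 / 2 ≤ (p (Set.Ici y)).toReal := by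
  set F := ProbabilityTheory.cdf p with hF
  set S : Set ℝ := {t : ℝ | 1 / 2 ≤ F t} with hS
  -- S is nonempty
  obtain ⟨t1, ht1⟩ := ((ProbabilityTheory.tendsto_cdf_atTop p).eventually
    (eventually_gt_nhds (by norm_num : (1:ℝ)/2 < 1))).exists
  have hne : S.Nonempty := ⟨t1, le_of_lt ht1⟩
  -- S is bounded below
  obtain ⟨t0, ht0⟩ := ((ProbabilityTheory.tendsto_cdf_atBot p).eventually
    (eventually_lt_nhds (by norm_num : (0:ℝ) < 1/2))).exists
  have hbdd : BddBelow S := by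
    refine ⟨t0, fun s hs => ?_⟩
    by_contra hc
    push_neg at hc
    exact absurd (le_trans hs (ProbabilityTheory.monotone_cdf p hc.le)) (not_le.2 ht0)
  set y := sInf S with hy
  refine ⟨y, ?_, ?_⟩
  · -- right continuity gives F y ≥ 1/2
    have hIoi : ∀ u ∈ Set.Ioi y, 1 / 2 ≤ F u := by
      intro u hu
      obtain ⟨s, hsS, hsu⟩ := exists_lt_of_csInf_lt hne hu
      exact le_trans hsS (ProbabilityTheory.monotone_cdf p hsu.le)
    have hrc : Filter.Tendsto F (nhdsWithin y (Set.Ioi y)) (nhds (F y)) :=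
      (F.right_continuous y).mono_left (nhdsWithin_mono _ Set.Ioi_subset_Ici_self)
    have : 1 / 2 ≤ F y :=
      ge_of_tendsto hrc (eventually_nhdsWithin_of_forall hIoi)
    rwa [ProbabilityTheory.cdf_eq_real, measureReal_def] at this
  · -- left limit at y is at most 1/2
    have hIio : ∀ t ∈ Set.Iio y, F t ≤ 1 / 2 := by
      intro t ht
      have : t ∉ S := notMem_of_lt_csInf ht hbdd
      exact le_of_not_ge this
    have hll : Function.leftLim F y ≤ 1 / 2 :=
      le_of_tendsto (F.mono.tendsto_leftLim y) (eventually_nhdsWithin_of_forall hIio)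
    have hmeas : p (Set.Ici y) = ENNReal.ofReal (1 - Function.leftLim F y) := by
      conv_lhs => rw [← ProbabilityTheory.measure_cdf p]
      exact F.measure_Ici (ProbabilityTheory.tendsto_cdf_atTop p) y
    rw [hmeas, ENNReal.toReal_ofReal (by linarith)]
    linarith

/-- **Breakdown point lower bound in dimension one.**
If `p*` on `ℝ` is halfspace-symmetric with center `μ*` and `0 ≤ ε < 1/2`, then
there is a finite constant `B` such that every Tukey median of any `p` with
`TV(p, p*) ≤ ε` is within distance `B` of `μ*`. -/
theorem median_breakdown_dim_one
    (pstar : Measure ℝ) [IsProbabilityMeasure pstar]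
    (μstar : ℝ) (hsym : IsHalfspaceSymmetric1 pstar μstar)
    (ε : ℝ) (hε0 : 0 ≤ ε) (hε : ε < 1 / 2) :
    ∃ B : ℝ, ∀ p : Measure ℝ, IsProbabilityMeasure p →
      tvDist1 p pstar ≤ ε →
      ∀ x : ℝ, IsTukeyMedian1 x p → |x - μstar| ≤ B := by
  set δ : ℝ := 1 / 2 - ε with hδ
  have hδpos : 0 < δ := by rw [hδ]; linarith
  -- right tail: choose a with (pstar (Ici a)).toReal < δ
  obtain ⟨s, hs⟩ := ((ProbabilityTheory.tendsto_cdf_atTop pstar).eventually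
    (eventually_gt_nhds (by linarith : 1 - δ < 1))).exists
  set a : ℝ := s + 1 with haa
  have haR : (pstar (Set.Ici a)).toReal < δ := by
    have hsub : pstar (Set.Ici a) ≤ pstar (Set.Iic s)ᶜ := by
      apply measure_mono
      intro z hz
      simp only [Set.mem_compl_iff, Set.mem_Iic, not_le]
      have : a ≤ z := hz
      rw [haa] at this
      linarith
    have h1 : (pstar (Set.Ici a)).toReal ≤ (pstar (Set.Iic s)ᶜ).toReal :=
      ENNReal.toReal_mono (measure_ne_top _ _) hsub
    have h2 : (pstar (Set.Iic s)ᶜ).toReal = 1 - (pstar (Set.Iic s)).toReal :=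
      toReal_measure_compl pstar measurableSet_Iic
    have h3 : 1 - δ < (pstar (Set.Iic s)).toReal := by
      rwa [ProbabilityTheory.cdf_eq_real, measureReal_def] at hs
    linarith
  -- left tail: choose b with (pstar (Iic b)).toReal < δ
  obtain ⟨b, hb⟩ := ((ProbabilityTheory.tendsto_cdf_atBot pstar).eventually
    (eventually_lt_nhds hδpos)).exists
  have hbL : (pstar (Set.Iic b)).toReal < δ := by
    rwa [ProbabilityTheory.cdf_eq_real, measureReal_def] at hb
  refine ⟨max (a - μstar) (μstar - b), ?_⟩
  intro p hp hTV x hmed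
  haveI := hp
  -- any Tukey median has depth at least 1/2
  obtain ⟨y, hy1, hy2⟩ := exists_median p
  have hdepth : 1 / 2 ≤ tukeyDepth1 x p :=
    le_trans (le_min hy2 hy1) (hmed y)
  have hxIci : 1 / 2 ≤ (p (Set.Ici x)).toReal := le_trans hdepth (min_le_left _ _)
  have hxIic : 1 / 2 ≤ (p (Set.Iic x)).toReal := le_trans hdepth (min_le_right _ _)
  -- transfer to pstar
  have hpsIci : δ ≤ (pstar (Set.Ici x)).toReal := by
    have := (tv_bound p pstar hTV (A := Set.Ici x) measurableSet_Ici).1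
    rw [hδ]; linarith
  have hpsIic : δ ≤ (pstar (Set.Iic x)).toReal := by
    have := (tv_bound p pstar hTV (A := Set.Iic x) measurableSet_Iic).1
    rw [hδ]; linarith
  -- conclude bounds on x
  have hxa : x ≤ a := by
    by_contra hc
    push_neg at hc
    have : (pstar (Set.Ici x)).toReal ≤ (pstar (Set.Ici a)).toReal :=
      ENNReal.toReal_mono (measure_ne_top _ _)
        (measure_mono (Set.Ici_subset_Ici.2 hc.le))
    linarith
  have hxb : b ≤ x := by
    by_contra hc
    push_neg at hc
    have : (pstar (Set.Iic x)).toReal ≤ (pstar (Set.Iic b)).toReal :=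
      ENNReal.toReal_mono (measure_ne_top _ _)
        (measure_mono (Set.Iic_subset_Iic.2 hc.le))
    linarith
  rw [abs_le]
  constructor
  · have := le_max_right (a - μstar) (μstar - b)
    linarith
  · have := le_max_left (a - μstar) (μstar - b)
    linarith

end
end

section
/- (Theorem 4, TV~ projection algorithm) Let h : [0, ∞) → [0, ∞) be a non-increasing function and let G(h) be the set of Borel probability measures on ℝ^d that are halfspace-symmetric with some center μ and satisfy sup_{v ∈ ℝ^d, ‖v‖ ≤ 1} p({x : ⟨v, x − μ⟩ > t}) ≤ h(t) for all t ≥ 0. Let p* ∈ G(h) have center μ*, let p be a Borel probability measure with TV(p, p*) ≤ ε where ε < 1/2, and let q ∈ G(h) with center μ_q satisfy TV~(q, p) ≤ TV~(g, p) for every g ∈ G(h) (i.e., q is a TV~-projection of p onto G(h)). Then for every t ≥ 0 with h(t) < 1/2 − ε, ‖μ_q − μ*‖ ≤ 2t. -/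
open MeasureTheory
open scoped RealInnerProductSpace ENNReal

noncomputable section

abbrev Euc (d : ℕ) := EuclideanSpace ℝ (Fin d)

/-- Tukey depth of a point `μ` w.r.t. a measure `p`: the infimum over nonzero
directions `v` of the mass of the halfspace `{x | ⟪v, x - μ⟫ ≥ 0}`. -/
def tukeyDepth {d : ℕ} (μ : Euc d) (p : Measure (Euc d)) : ℝ :=
  ⨅ v : {v : Euc d // v ≠ 0}, (p {x | 0 ≤ ⟪(v : Euc d), x - μ⟫}).toReal

/-- `x` is a Tukey median of `p` if it maximizes the Tukey depth. -/
def IsTukeyMedian {d : ℕ} (x : Euc d) (p : Measure (Euc d)) : Prop :=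
  ∀ y : Euc d, tukeyDepth y p ≤ tukeyDepth x p

/-- Total variation distance: supremum over Borel sets `A` of `p A - q A`. -/
def tvDist {d : ℕ} (p q : Measure (Euc d)) : ℝ :=
  ⨆ A : {A : Set (Euc d) // MeasurableSet A}, ((p A).toReal - (q A).toReal)

/-- The halfspace metric `TV~(p, q)`. -/
def halfspaceDist {d : ℕ} (p q : Measure (Euc d)) : ℝ :=
  ⨆ vt : Euc d × ℝ,
    |(p {x | vt.2 ≤ ⟪vt.1, x⟫}).toReal - (q {x | vt.2 ≤ ⟪vt.1, x⟫}).toReal|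

/-- Halfspace symmetry around `μ`: every one-dimensional projection of `X - μ`
is symmetric in distribution. -/
def IsHalfspaceSymmetric {d : ℕ} (p : Measure (Euc d)) (μ : Euc d) : Prop :=
  ∀ v : Euc d,
    p.map (fun x => ⟪v, x - μ⟫) = p.map (fun x => -⟪v, x - μ⟫)

/-- Decay function `h(t)` of a measure `p` centered at `μ`. -/
def decay {d : ℕ} (p : Measure (Euc d)) (μ : Euc d) (t : ℝ) : ℝ :=
  ⨆ v : {v : Euc d // ‖v‖ ≤ 1}, (p {x | t < ⟪(v : Euc d), x - μ⟫}).toReal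


lemma inner_cont {d : ℕ} (v μ : Euc d) : Continuous (fun x : Euc d => ⟪v, x - μ⟫) :=
  continuous_const.inner (continuous_id.sub continuous_const)

lemma toReal_prob_le_one {d : ℕ} (p : Measure (Euc d)) [IsProbabilityMeasure p]
    (A : Set (Euc d)) : (p A).toReal ≤ 1 := by
  have := prob_le_one (μ := p) (s := A)
  calc (p A).toReal ≤ (1 : ℝ≥0∞).toReal := ENNReal.toReal_mono (by norm_num) this
    _ = 1 := by simp

lemma sym_measure {d : ℕ} (q : Measure (Euc d)) [IsProbabilityMeasure q] (μ : Euc d)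
    (hs : ∀ v : Euc d, q.map (fun x => ⟪v, x - μ⟫) = q.map (fun x => -⟪v, x - μ⟫))
    (v : Euc d) (c : ℝ) :
    q {x | -c ≤ ⟪v, x - μ⟫} = q {x | ⟪v, x - μ⟫ ≤ c} := by
  have hf : Measurable (fun x : Euc d => ⟪v, x - μ⟫) := (inner_cont v μ).measurable
  have h1 : q.map (fun x => ⟪v, x - μ⟫) (Set.Ici (-c)) = q {x | -c ≤ ⟪v, x - μ⟫} := by
    rw [Measure.map_apply hf measurableSet_Ici]; rfl
  have h2 : q.map (fun x => -⟪v, x - μ⟫) (Set.Ici (-c)) = q {x | ⟪v, x - μ⟫ ≤ c} := by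
    rw [Measure.map_apply (f := fun x => -⟪v, x - μ⟫) hf.neg measurableSet_Ici]
    congr 1
    ext x
    simp [neg_le]
  rw [← h1, hs v, h2]

lemma toReal_compl {d : ℕ} (p : Measure (Euc d)) [IsProbabilityMeasure p]
    {A : Set (Euc d)} (hA : MeasurableSet A) :
    (p Aᶜ).toReal = 1 - (p A).toReal := by
  rw [prob_compl_eq_one_sub hA, ENNReal.toReal_sub_of_le prob_le_one (by norm_num)]
  simp

lemma tv_set_bound {d : ℕ} (p q : Measure (Euc d)) [IsProbabilityMeasure p]
    [IsProbabilityMeasure q] {A : Set (Euc d)} (hA : MeasurableSet A) :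
    (p A).toReal - (q A).toReal ≤ tvDist p q := by
  apply le_ciSup (f := fun A : {A : Set (Euc d) // MeasurableSet A} =>
    ((p A).toReal - (q A).toReal)) (c := (⟨A, hA⟩ : {A : Set (Euc d) // MeasurableSet A}))
  refine ⟨1, ?_⟩
  rintro x ⟨B, rfl⟩
  have h1 := toReal_prob_le_one p B
  have h2 : (0:ℝ) ≤ (q (B:Set (Euc d))).toReal := ENNReal.toReal_nonneg
  simp only []
  linarith

lemma tv_set_bound' {d : ℕ} (p q : Measure (Euc d)) [IsProbabilityMeasure p]
    [IsProbabilityMeasure q] {A : Set (Euc d)} (hA : MeasurableSet A) :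
    (q A).toReal - (p A).toReal ≤ tvDist p q := by
  have := tv_set_bound p q hA.compl
  rw [toReal_compl p hA, toReal_compl q hA] at this
  linarith

lemma hsd_bound {d : ℕ} (p q : Measure (Euc d)) [IsProbabilityMeasure p]
    [IsProbabilityMeasure q] (v : Euc d) (t : ℝ) :
    |(p {x | t ≤ ⟪v, x⟫}).toReal - (q {x | t ≤ ⟪v, x⟫}).toReal| ≤ halfspaceDist p q := by
  apply le_ciSup (f := fun vt : Euc d × ℝ =>
    |(p {x | vt.2 ≤ ⟪vt.1, x⟫}).toReal - (q {x | vt.2 ≤ ⟪vt.1, x⟫}).toReal|) (c := (v, t))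
  refine ⟨1, ?_⟩
  rintro x ⟨vt, rfl⟩
  have h1 := toReal_prob_le_one p {x | vt.2 ≤ ⟪vt.1, x⟫}
  have h2 := toReal_prob_le_one q {x | vt.2 ≤ ⟪vt.1, x⟫}
  have h3 : (0:ℝ) ≤ (p {x | vt.2 ≤ ⟪vt.1, x⟫}).toReal := ENNReal.toReal_nonneg
  have h4 : (0:ℝ) ≤ (q {x | vt.2 ≤ ⟪vt.1, x⟫}).toReal := ENNReal.toReal_nonneg
  simp only []
  rw [abs_le]
  constructor <;> linarith

lemma halfspace_meas' {d : ℕ} (v : Euc d) (t : ℝ) :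
    MeasurableSet {x : Euc d | t ≤ ⟪v, x⟫} :=
  (isClosed_le continuous_const (continuous_const.inner continuous_id)).measurableSet

lemma hsd_le_tv {d : ℕ} (p q : Measure (Euc d)) [IsProbabilityMeasure p]
    [IsProbabilityMeasure q] {ε : ℝ} (htv : tvDist q p ≤ ε) :
    halfspaceDist p q ≤ ε := by
  have hε : 0 ≤ ε := by
    have := tv_set_bound q p (MeasurableSet.empty)
    simpa using this.trans htv
  apply Real.iSup_le _ hε
  rintro ⟨v, t⟩
  dsimp only
  rw [abs_le]
  constructor
  · have := tv_set_bound q p (halfspace_meas' v t)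
    linarith [this.trans htv]
  · have := tv_set_bound' q p (halfspace_meas' v t)
    linarith [this.trans htv]

lemma decay_bound {d : ℕ} (p : Measure (Euc d)) [IsProbabilityMeasure p]
    (μ : Euc d) (t : ℝ) {v : Euc d} (hv : ‖v‖ ≤ 1) :
    (p {x | t < ⟪v, x - μ⟫}).toReal ≤ decay p μ t := by
  apply le_ciSup (f := fun v : {v : Euc d // ‖v‖ ≤ 1} =>
    (p {x | t < ⟪(v : Euc d), x - μ⟫}).toReal) (c := ⟨v, hv⟩)
  exact ⟨1, by rintro x ⟨w, rfl⟩; exact toReal_prob_le_one p _⟩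

/-- **Theorem 4, TV~ projection algorithm.** Let `G(h)` be the
class of halfspace-symmetric probability measures with decay bound `h`
(non-increasing, non-negative on `[0, ∞)`). Let `p* ∈ G(h)` with center `μ*`,
let `TV(p, p*) ≤ ε < 1/2`, and let `q ∈ G(h)` with center `μ_q` be a
`TV~`-projection of `p` onto `G(h)`. Then for every `t ≥ 0` with
`h(t) < 1/2 − ε` we have `‖μ_q − μ*‖ ≤ 2t`. -/
theorem halfspace_projection_algorithm {d : ℕ}
    (h : ℝ → ℝ) (hmono : AntitoneOn h (Set.Ici 0)) (hnonneg : ∀ t, 0 ≤ t → 0 ≤ h t)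
    (pstar : Measure (Euc d)) [IsProbabilityMeasure pstar]
    (μstar : Euc d)
    (hsymp : IsHalfspaceSymmetric pstar μstar)
    (hdecp : ∀ t, 0 ≤ t → decay pstar μstar t ≤ h t)
    (p : Measure (Euc d)) [IsProbabilityMeasure p]
    (ε : ℝ) (hε : ε < 1 / 2) (htv : tvDist p pstar ≤ ε)
    (q : Measure (Euc d)) [IsProbabilityMeasure q]
    (μq : Euc d)
    (hsymq : IsHalfspaceSymmetric q μq)
    (hdecq : ∀ t, 0 ≤ t → decay q μq t ≤ h t)
    (hproj : ∀ g : Measure (Euc d), IsProbabilityMeasure g →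
      (∃ ν : Euc d, IsHalfspaceSymmetric g ν ∧ ∀ t, 0 ≤ t → decay g ν t ≤ h t) →
      halfspaceDist q p ≤ halfspaceDist g p) :
    ∀ t : ℝ, 0 ≤ t → h t < 1 / 2 - ε → ‖μq - μstar‖ ≤ 2 * t := by
  intro t ht hht
  by_contra hcon
  push_neg at hcon
  set D : ℝ := ‖μq - μstar‖ with hD
  have hDpos : 0 < D := lt_of_le_of_lt (by linarith) hcon
  set c : ℝ := D / 2 with hc
  have htc : t < c := by rw [hc]; linarith
  set v : Euc d := D⁻¹ • (μq - μstar) with hv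
  have hvnorm : ‖v‖ = 1 := by
    rw [hv, norm_smul, norm_inv, Real.norm_eq_abs, abs_of_pos hDpos, ← hD]
    field_simp
  have hvin : ⟪v, μq - μstar⟫ = D := by
    rw [hv, real_inner_smul_left, real_inner_self_eq_norm_sq, ← hD]
    field_simp
  set s : ℝ := ⟪v, μstar⟫ + c with hs
  set H : Set (Euc d) := {x | s ≤ ⟪v, x⟫} with hH
  have hinq : ⟪v, μq⟫ = ⟪v, μstar⟫ + D := by
    have : ⟪v, μq - μstar⟫ = ⟪v, μq⟫ - ⟪v, μstar⟫ := inner_sub_right v μq μstar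
    linarith [hvin.symm.trans this]
  have hH1 : H = {x | c ≤ ⟪v, x - μstar⟫} := by
    ext x
    simp only [hH, Set.mem_setOf_eq, inner_sub_right, hs]
    constructor <;> intro hx <;> linarith
  have hH2 : H = {x | -c ≤ ⟪v, x - μq⟫} := by
    ext x
    simp only [hH, Set.mem_setOf_eq, inner_sub_right, hs]
    rw [hinq]
    constructor <;> intro hx <;> [skip; skip] <;>
      (have hc2 : D = 2 * c := by rw [hc]; ring) <;> linarith
  -- p* gives little mass to H
  have hα : (pstar H).toReal ≤ h t := by
    have hsub : H ⊆ {x | t < ⟪v, x - μstar⟫} := by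
      rw [hH1]; intro x hx; exact lt_of_lt_of_le htc hx
    calc (pstar H).toReal
        ≤ (pstar {x | t < ⟪v, x - μstar⟫}).toReal :=
          ENNReal.toReal_mono (measure_ne_top _ _) (measure_mono hsub)
      _ ≤ decay pstar μstar t := decay_bound pstar μstar t hvnorm.le
      _ ≤ h t := hdecp t ht
  -- q gives large mass to H
  have hγ : 1 - h t ≤ (q H).toReal := by
    have e1 : q H = q {x | ⟪v, x - μq⟫ ≤ c} := by
      rw [hH2]; exact sym_measure q μq hsymq v c
    have e2 : {x : Euc d | ⟪v, x - μq⟫ ≤ c} = {x : Euc d | c < ⟪v, x - μq⟫}ᶜ := by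
      ext x; simp [not_lt]
    have hmeasc : MeasurableSet {x : Euc d | c < ⟪v, x - μq⟫} :=
      (isOpen_lt continuous_const (inner_cont v μq)).measurableSet
    have hq1 : (q {x | c < ⟪v, x - μq⟫}).toReal ≤ h t := by
      have hsub : {x : Euc d | c < ⟪v, x - μq⟫} ⊆ {x | t < ⟪v, x - μq⟫} :=
        fun x hx => lt_trans htc hx
      calc (q {x | c < ⟪v, x - μq⟫}).toReal
          ≤ (q {x | t < ⟪v, x - μq⟫}).toReal :=
            ENNReal.toReal_mono (measure_ne_top _ _) (measure_mono hsub)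
        _ ≤ decay q μq t := decay_bound q μq t hvnorm.le
        _ ≤ h t := hdecq t ht
    have : (q H).toReal = 1 - (q {x | c < ⟪v, x - μq⟫}).toReal := by
      rw [e1, e2, toReal_compl q hmeasc]
    linarith
  -- q is close to p on halfspaces, p close to p* in TV
  have hqp : halfspaceDist q p ≤ ε := by
    have h1 : halfspaceDist pstar p ≤ ε := hsd_le_tv pstar p htv
    exact (hproj pstar inferInstance ⟨μstar, hsymp, hdecp⟩).trans h1
  have h4 : |(q H).toReal - (p H).toReal| ≤ ε := (hsd_bound q p v s).trans hqp
  have h5 : (p H).toReal - (pstar H).toReal ≤ ε :=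
    (tv_set_bound p pstar (halfspace_meas' v s)).trans htv
  rw [abs_le] at h4
  linarith [h4.1, h4.2]

end
end
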